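/- In a matroid, the optimality of a basis under a weight function depends only on the induced ordering of the ground set: if c and c' are weight functions on E inducing the same (weak) order, i.e., c(e) ≤ c(f) ↔ c'(e) ≤ c'(f) for all e,f, then a basis B is of minimum c-weight if and only if it is of minimum c'-weight. -/

import Mathlib

open Set

section aux

variable {α : Type*}

/-- Finset counting lemma: if filters of `S` dominate filters of `S'` in cardinality and
cards agree, then the sum over `S` is at most the sum over `S'`. -/
lemma sum_le_of_filter_card_le (c : α → ℝ) [DecidableEq α] :
    ∀ n (S S' : Finset α), S.card = n → S.card = S'.card →
    (∀ t : ℝ, (S'.filter (fun e => c e ≤ t)).card ≤ (S.filter (fun e => c e ≤ t)).card) →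
    (∑ e ∈ S, c e) ≤ ∑ e ∈ S', c e := by
  intro n
  induction n with
  | zero =>
    intro S S' h0 hcard _
    have hS : S = ∅ := Finset.card_eq_zero.1 h0
    have hS' : S' = ∅ := Finset.card_eq_zero.1 (by rw [← hcard]; exact h0)
    simp [hS, hS']
  | succ n ih =>
    intro S S' hSn hcard hcount
    have hS' : S'.Nonempty := by
      rw [← Finset.card_pos, ← hcard, hSn]; omega
    obtain ⟨e', he'S, he'min⟩ := S'.exists_min_image c hS'
    have h1 : 0 < (S.filter (fun e => c e ≤ c e')).card := by
      refine lt_of_lt_of_le ?_ (hcount (c e'))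
      rw [Finset.card_pos]
      exact ⟨e', Finset.mem_filter.2 ⟨he'S, le_rfl⟩⟩
    rw [Finset.card_pos] at h1
    obtain ⟨e, hef⟩ := h1
    rw [Finset.mem_filter] at hef
    obtain ⟨heS, hee'⟩ := hef
    have hsum := ih (S.erase e) (S'.erase e')
      (by rw [Finset.card_erase_of_mem heS, hSn]; rfl)
      (by rw [Finset.card_erase_of_mem heS, Finset.card_erase_of_mem he'S, hcard])
      ?_
    · calc ∑ x ∈ S, c x = c e + ∑ x ∈ S.erase e, c x := by
            rw [Finset.add_sum_erase _ _ heS]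
        _ ≤ c e' + ∑ x ∈ S'.erase e', c x := add_le_add hee' hsum
        _ = ∑ x ∈ S', c x := by rw [Finset.add_sum_erase _ _ he'S]
    · intro t
      rcases le_or_gt (c e') t with ht | ht
      · rw [Finset.filter_erase, Finset.filter_erase,
          Finset.card_erase_of_mem (Finset.mem_filter.2 ⟨he'S, ht⟩),
          Finset.card_erase_of_mem (Finset.mem_filter.2 ⟨heS, hee'.trans ht⟩)]
        exact Nat.sub_le_sub_right (hcount t) 1
      · have : (S'.erase e').filter (fun e => c e ≤ t) = ∅ := by
          refine Finset.filter_eq_empty_iff.2 ?_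
          intro x hx hle
          exact absurd (le_trans (he'min x (Finset.mem_of_mem_erase hx)) hle) (not_le.2 ht)
        simp [this]

variable [Fintype α]

lemma finsum_mem_set_eq (c : α → ℝ) (S : Set α) :
    (∑ᶠ x ∈ S, c x) = ∑ x ∈ S.toFinite.toFinset, c x := by
  rw [← finsum_mem_coe_finset, Set.Finite.coe_toFinset]

/-- Set version of the counting lemma, in terms of `ncard` and `finsum`. -/
lemma finsum_le_of_counts (c : α → ℝ) (S S' : Set α) (hcard : S.ncard = S'.ncard)
    (h : ∀ t : ℝ, (S' ∩ {x | c x ≤ t}).ncard ≤ (S ∩ {x | c x ≤ t}).ncard) :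
    (∑ᶠ x ∈ S, c x) ≤ ∑ᶠ x ∈ S', c x := by
  classical
  rw [finsum_mem_set_eq, finsum_mem_set_eq]
  refine sum_le_of_filter_card_le c S.toFinite.toFinset.card _ _ rfl ?_ ?_
  · rw [← Set.ncard_eq_toFinset_card, ← Set.ncard_eq_toFinset_card, hcard]
  · intro t
    have h1 : ∀ (T : Set α), (T.toFinite.toFinset.filter (fun e => c e ≤ t)).card
        = (T ∩ {x | c x ≤ t}).ncard := by
      intro T
      rw [Set.ncard_eq_toFinset_card (T ∩ {x | c x ≤ t})]
      congr 1
      ext x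
      simp only [Set.Finite.mem_toFinset, Finset.mem_filter, Set.mem_inter_iff,
        Set.mem_setOf_eq]
    rw [h1, h1]
    exact h t

/-- A minimum-weight basis dominates every basis in every "weight at most t" count. -/
lemma counts_of_min (M : Matroid α) (c : α → ℝ) (B : Set α) (hB : M.IsBase B)
    (hmin : ∀ B', M.IsBase B' → (∑ᶠ x ∈ B, c x) ≤ ∑ᶠ x ∈ B', c x) :
    ∀ B', M.IsBase B' → ∀ t : ℝ, (B' ∩ {x | c x ≤ t}).ncard ≤ (B ∩ {x | c x ≤ t}).ncard := by
  intro B' hB' t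
  by_contra hlt
  push_neg at hlt
  set I : Set α := B ∩ {x | c x ≤ t} with hI
  set J : Set α := B' ∩ {x | c x ≤ t} with hJ
  have hIind : M.Indep I := hB.indep.subset inter_subset_left
  have hJind : M.Indep J := hB'.indep.subset inter_subset_left
  have hIJ : I.encard < J.encard := by
    rw [← (Set.toFinite I).cast_ncard_eq, ← (Set.toFinite J).cast_ncard_eq]
    exact_mod_cast hlt
  obtain ⟨e, heJI, heind⟩ := hIind.augment hJind hIJ
  have heB : e ∉ B := fun heB => heJI.2 ⟨heB, heJI.1.2⟩
  obtain ⟨B'', hB'', hsub, hsub'⟩ := heind.exists_isBase_subset_union_isBase hB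
  have hsub'' : B'' ⊆ insert e B := by
    refine hsub'.trans ?_
    rw [insert_union]
    exact insert_subset_insert (union_subset inter_subset_left subset_rfl)
  have heB'' : e ∈ B'' := hsub (mem_insert _ _)
  have hIB'' : I ⊆ B'' := (subset_insert _ _).trans hsub
  -- B \ B'' is a singleton {f}
  have hD : (B \ B'').encard = 1 := by
    have hunion : insert e B = B'' ∪ (B \ B'') := by
      apply Subset.antisymm
      · intro x hx
        rcases hx with rfl | hx
        · exact Or.inl heB''
        · by_cases hxB'' : x ∈ B''
          · exact Or.inl hxB''
          · exact Or.inr ⟨hx, hxB''⟩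
      · exact union_subset hsub'' (diff_subset.trans (subset_insert _ _))
    have hdisj : Disjoint B'' (B \ B'') := disjoint_sdiff_right
    have h1 : (insert e B).encard = B.encard + 1 := Set.encard_insert_of_notMem heB
    have h2 : (B'' ∪ (B \ B'')).encard = B''.encard + (B \ B'').encard :=
      Set.encard_union_eq hdisj
    have h3 : B''.encard = B.encard := hB''.encard_eq_encard_of_isBase hB
    have hfin : B.encard ≠ ⊤ := (Set.toFinite B).encard_lt_top.ne
    rw [hunion, h2, h3] at h1
    exact WithTop.add_left_cancel hfin h1
  obtain ⟨f, hf⟩ := Set.encard_eq_one.1 hD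
  have hfB : f ∈ B ∧ f ∉ B'' := by
    have : f ∈ B \ B'' := hf ▸ rfl
    exact ⟨this.1, this.2⟩
  have hfI : f ∉ I := fun hfI => hfB.2 (hIB'' hfI)
  have hcf : t < c f := by
    by_contra hcf
    exact hfI ⟨hfB.1, not_lt.1 hcf⟩
  have hB''eq : B'' = insert e (B \ {f}) := by
    apply Subset.antisymm
    · intro x hx
      have hx' := hsub'' hx
      rcases hx' with rfl | hxB
      · exact mem_insert _ _
      · refine Or.inr ⟨hxB, ?_⟩
        rintro rfl
        exact hfB.2 hx
    · refine insert_subset heB'' ?_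
      intro x hx
      by_contra hxB''
      have : x ∈ B \ B'' := ⟨hx.1, hxB''⟩
      rw [hf] at this
      exact hx.2 this
  -- compute weights
  have hfe : e ∉ B \ {f} := fun h => heB h.1
  have hsum1 : (∑ᶠ x ∈ B'', c x) = c e + ∑ᶠ x ∈ B \ {f}, c x := by
    rw [hB''eq, finsum_mem_insert c hfe (Set.toFinite _)]
  have hsum2 : (∑ᶠ x ∈ B, c x) = c f + ∑ᶠ x ∈ B \ {f}, c x := by
    have hBeq : B = insert f (B \ {f}) := by
      rw [Set.insert_diff_singleton, Set.insert_eq_of_mem hfB.1]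
    have h2 := finsum_mem_insert c (show f ∉ B \ {f} from fun h => h.2 rfl)
      (Set.toFinite (B \ {f}))
    rw [← hBeq] at h2
    exact h2
  have hlt' : (∑ᶠ x ∈ B'', c x) < ∑ᶠ x ∈ B, c x := by
    rw [hsum1, hsum2]
    have : c e ≤ t := heJI.1.2
    linarith
  exact absurd (hmin B'' hB'') (not_le.2 hlt')

/-- Minimality is equivalent to the counting condition. -/
lemma min_iff_counts (M : Matroid α) (c : α → ℝ) (B : Set α) (hB : M.IsBase B) :
    (∀ B', M.IsBase B' → (∑ᶠ x ∈ B, c x) ≤ ∑ᶠ x ∈ B', c x) ↔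
    (∀ B', M.IsBase B' → ∀ t : ℝ, (B' ∩ {x | c x ≤ t}).ncard ≤ (B ∩ {x | c x ≤ t}).ncard) := by
  constructor
  · exact counts_of_min M c B hB
  · intro h B' hB'
    exact finsum_le_of_counts c B B' (hB.ncard_eq_ncard_of_isBase hB') (h B' hB')

/-- The counting condition only depends on the order of the weights. -/
lemma counts_invariant (c c' : α → ℝ) (horder : ∀ e f : α, c e ≤ c f ↔ c' e ≤ c' f)
    (B B' : Set α)
    (h : ∀ t : ℝ, (B' ∩ {x | c x ≤ t}).ncard ≤ (B ∩ {x | c x ≤ t}).ncard) :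
    ∀ t : ℝ, (B' ∩ {x | c' x ≤ t}).ncard ≤ (B ∩ {x | c' x ≤ t}).ncard := by
  intro t
  set U : Set α := {x | c' x ≤ t} with hU
  rcases U.eq_empty_or_nonempty with hUe | hUne
  · simp [hUe]
  · obtain ⟨f, hfU, hfmax⟩ := Set.exists_max_image U c' (Set.toFinite U) hUne
    have hUeq : U = {x | c x ≤ c f} := by
      ext x
      constructor
      · intro hx
        exact (horder x f).2 (hfmax x hx)
      · intro hx
        exact le_trans ((horder x f).1 hx) hfU
    rw [hUeq]
    exact h (c f)

end aux

/-- In a matroid, optimality of a basis depends only on the induced (weak) order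
of the weights: if `c` and `c'` induce the same order then a basis is of minimum
`c`-weight iff it is of minimum `c'`-weight. -/
theorem optimality_depends_only_on_order {α : Type*} [Fintype α] (M : Matroid α)
    (c c' : α → ℝ) (horder : ∀ e f : α, c e ≤ c f ↔ c' e ≤ c' f)
    (B : Set α) (hB : M.IsBase B) :
    (∀ B', M.IsBase B' → (∑ᶠ x ∈ B, c x) ≤ ∑ᶠ x ∈ B', c x) ↔
      (∀ B', M.IsBase B' → (∑ᶠ x ∈ B, c' x) ≤ ∑ᶠ x ∈ B', c' x) := by
  rw [min_iff_counts M c B hB, min_iff_counts M c' B hB]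
  constructor
  · intro h B' hB'
    exact counts_invariant c c' horder B B' (h B' hB')
  · intro h B' hB'
    exact counts_invariant c' c (fun e f => (horder e f).symm) B B' (h B' hB')
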